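/- Let n ≥ 4 and let α, β ∈ K satisfy α ≠ β and α ≠ −β. If T : Mat_n(K) → Mat_n(K) is a bijective K-linear map that stabilizes det^{(α,β)}, then the assignment sending each pair (i,j) to the unique position (i',j') of the nonzero entry of T(E_{ij}) is a bijection of {1,…,n} × {1,…,n} onto itself, and there exist nonzero scalars c_{ij} ∈ K with T(E_{ij}) = c_{ij}·E_{i'j'} for all i, j. -/

import Mathlib

open Matrix Finset

noncomputable def evenDet {K : Type*} [Field K] {n : ℕ} (A : Matrix (Fin n) (Fin n) K) : K :=
  ∑ σ ∈ Finset.univ.filter (fun σ : Equiv.Perm (Fin n) => Equiv.Perm.sign σ = 1),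
    ∏ i, A i (σ i)

noncomputable def oddDet {K : Type*} [Field K] {n : ℕ} (A : Matrix (Fin n) (Fin n) K) : K :=
  ∑ σ ∈ Finset.univ.filter (fun σ : Equiv.Perm (Fin n) => Equiv.Perm.sign σ = -1),
    ∏ i, A i (σ i)

/-- The generalized determinant `det^{(α,β)}`. -/
noncomputable def gdet {K : Type*} [Field K] {n : ℕ} (α β : K) (A : Matrix (Fin n) (Fin n) K) : K :=
  α * evenDet A + β * oddDet A

/-- The permutation matrix `P = (δ_{i, σ(j)})`. -/
def permMat (K : Type*) [Field K] {n : ℕ} (σ : Equiv.Perm (Fin n)) : Matrix (Fin n) (Fin n) K :=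
  fun i j => if i = σ j then 1 else 0

open Polynomial

namespace GAux

variable {K : Type*} [Field K] {n : ℕ}

noncomputable def wt (α β : K) (σ : Equiv.Perm (Fin n)) : K :=
  if Equiv.Perm.sign σ = 1 then α else β

lemma sign_ne_one {σ : Equiv.Perm (Fin n)} (h : ¬ Equiv.Perm.sign σ = 1) :
    Equiv.Perm.sign σ = -1 := by
  rcases Int.units_eq_one_or (Equiv.Perm.sign σ) with h1 | h1 <;> simp_all

lemma gdet_eq_sum (α β : K) (A : Matrix (Fin n) (Fin n) K) :
    gdet α β A = ∑ σ : Equiv.Perm (Fin n), wt α β σ * ∏ i, A i (σ i) := by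
  rw [gdet, evenDet, oddDet, Finset.mul_sum, Finset.mul_sum,
    ← Finset.sum_filter_add_sum_filter_not univ
      (fun σ : Equiv.Perm (Fin n) => Equiv.Perm.sign σ = 1)
      (fun σ => wt α β σ * ∏ i, A i (σ i))]
  congr 1
  · exact Finset.sum_congr rfl fun σ hσ => by
      simp only [mem_filter] at hσ; rw [wt, if_pos hσ.2]
  · rw [show (univ.filter fun σ : Equiv.Perm (Fin n) => ¬ Equiv.Perm.sign σ = 1)
        = univ.filter fun σ : Equiv.Perm (Fin n) => Equiv.Perm.sign σ = -1 by
      ext σ; simp only [mem_filter, mem_univ, true_and]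
      constructor
      · exact sign_ne_one
      · intro h; simp [h]]
    exact Finset.sum_congr rfl fun σ hσ => by
      simp only [mem_filter] at hσ
      rw [wt, if_neg (by simp [hσ.2])]

lemma gdet_transpose (α β : K) (A : Matrix (Fin n) (Fin n) K) :
    gdet α β Aᵀ = gdet α β A := by
  rw [gdet_eq_sum, gdet_eq_sum]
  apply Finset.sum_equiv (Equiv.inv (Equiv.Perm (Fin n)))
  · intro σ; simp
  · intro σ _
    have h1 : wt α β σ⁻¹ = wt α β σ := by
      simp [wt, Equiv.Perm.sign_inv]
    rw [Equiv.inv_apply, h1]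
    congr 1
    calc ∏ i, Aᵀ i (σ i) = ∏ i, A (σ i) i := rfl
      _ = ∏ i, A (σ i) (σ⁻¹ (σ i)) := by simp
      _ = ∏ i, A i (σ⁻¹ i) := Equiv.prod_comp σ (fun j => A j (σ⁻¹ j))


def CrossFree {K : Type*} [Field K] {n : ℕ} (B : Matrix (Fin n) (Fin n) K) : Prop :=
  ∀ i1 i2 j1 j2 : Fin n, i1 ≠ i2 → j1 ≠ j2 → B i1 j1 = 0 ∨ B i2 j2 = 0

def Affine {K : Type*} [Field K] {n : ℕ} (α β : K) (B : Matrix (Fin n) (Fin n) K) : Prop :=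
  ∃ h : Matrix (Fin n) (Fin n) K → K,
    ∀ C t, gdet α β (C + t • B) = gdet α β C + t * h C

lemma affine_row (α β : K) (M : Matrix (Fin n) (Fin n) K) (i0 : Fin n)
    (hM : ∀ a, a ≠ i0 → ∀ b, M a b = 0) : Affine α β M := by
  refine ⟨fun A => ∑ σ : Equiv.Perm (Fin n),
    wt α β σ * (M i0 (σ i0) * ∏ i ∈ univ.erase i0, A i (σ i)), fun A t => ?_⟩
  rw [gdet_eq_sum, gdet_eq_sum, Finset.mul_sum, ← Finset.sum_add_distrib]
  refine Finset.sum_congr rfl fun σ _ => ?_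
  have key : (∏ i, (A + t • M) i (σ i)) =
      (∏ i, A i (σ i)) + t * (M i0 (σ i0) * ∏ i ∈ univ.erase i0, A i (σ i)) := by
    rw [← Finset.mul_prod_erase univ _ (mem_univ i0),
        ← Finset.mul_prod_erase univ (fun i => A i (σ i)) (mem_univ i0),
        Finset.prod_congr rfl (fun i hi => show (A + t • M) i (σ i) = A i (σ i) by
          simp [Matrix.add_apply, hM i (Finset.mem_erase.1 hi).1 (σ i)])]
    simp [Matrix.add_apply]; ring
  rw [key]; ring

lemma affine_col (α β : K) (M : Matrix (Fin n) (Fin n) K) (j0 : Fin n)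
    (hM : ∀ a b, b ≠ j0 → M a b = 0) : Affine α β M := by
  obtain ⟨h, hh⟩ := affine_row α β Mᵀ j0 (fun a ha b => hM b a ha)
  refine ⟨fun C => h Cᵀ, fun C t => ?_⟩
  calc gdet α β (C + t • M) = gdet α β (C + t • M)ᵀ := (gdet_transpose α β _).symm
    _ = gdet α β (Cᵀ + t • Mᵀ) := by rw [Matrix.transpose_add, Matrix.transpose_smul]
    _ = gdet α β Cᵀ + t * h Cᵀ := hh Cᵀ t
    _ = gdet α β C + t * h Cᵀ := by rw [gdet_transpose]


set_option maxRecDepth 8000 in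
set_option maxHeartbeats 1000000 in
lemma keycoef [CharZero K] (α β : K) (B : Matrix (Fin n) (Fin n) K)
    (hB : Affine α β B) (i1 i2 : Fin n) (h12 : i1 ≠ i2) (σ0 : Equiv.Perm (Fin n)) :
    wt α β σ0 * (B i1 (σ0 i1) * B i2 (σ0 i2)) +
      wt α β (Equiv.swap (σ0 i1) (σ0 i2) * σ0) * (B i1 (σ0 i2) * B i2 (σ0 i1)) = 0 := by
  classical
  set C : Matrix (Fin n) (Fin n) K :=
    fun a b => if a ≠ i1 ∧ a ≠ i2 ∧ b = σ0 a then 1 else 0 with hCdef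
  set q : Polynomial K := ∑ σ : Equiv.Perm (Fin n),
    Polynomial.C (wt α β σ) *
      ∏ i, (Polynomial.C (C i (σ i)) + Polynomial.C (B i (σ i)) * Polynomial.X) with hqdef
  have heval : ∀ t : K, q.eval t = gdet α β (C + t • B) := by
    intro t
    rw [gdet_eq_sum, hqdef]
    rw [Polynomial.eval_finset_sum]
    refine Finset.sum_congr rfl fun σ _ => ?_
    rw [Polynomial.eval_mul, Polynomial.eval_C, Polynomial.eval_prod]
    congr 1
    refine Finset.prod_congr rfl fun i _ => ?_
    simp only [Polynomial.eval_add, Polynomial.eval_mul, Polynomial.eval_C, Polynomial.eval_X,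
      Matrix.add_apply, Matrix.smul_apply, smul_eq_mul]
    ring
  obtain ⟨h, hh⟩ := hB
  have hq : q = Polynomial.C (gdet α β C) + Polynomial.C (h C) * Polynomial.X := by
    apply Polynomial.funext
    intro t
    rw [heval, hh C t]
    simp only [Polynomial.eval_add, Polynomial.eval_mul, Polynomial.eval_C, Polynomial.eval_X]
    ring
  have hc2 : q.coeff 2 = 0 := by
    rw [hq]
    simp [Polynomial.coeff_add, Polynomial.coeff_C, Polynomial.coeff_C_mul, Polynomial.coeff_X]
  set s : Finset (Fin n) := (univ.erase i1).erase i2 with hsdef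
  have hi2mem : i2 ∈ univ.erase i1 := Finset.mem_erase.2 ⟨h12.symm, mem_univ i2⟩
  have hCapp : ∀ a b, C a b = if a ≠ i1 ∧ a ≠ i2 ∧ b = σ0 a then 1 else 0 := fun a b => by
    rw [hCdef]
  have hCrow : ∀ b, C i1 b = 0 := by
    intro b; rw [hCapp]; simp
  have hCrow2 : ∀ b, C i2 b = 0 := by
    intro b; rw [hCapp]; simp
  have hFcoeff : ∀ σ : Equiv.Perm (Fin n),
      (∏ i, (Polynomial.C (C i (σ i)) + Polynomial.C (B i (σ i)) * Polynomial.X)).coeff 2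
      = B i1 (σ i1) * B i2 (σ i2) * ∏ i ∈ s, C i (σ i) := by
    intro σ
    rw [← Finset.mul_prod_erase univ _ (mem_univ i1),
        ← Finset.mul_prod_erase _ _ hi2mem, hCrow, hCrow2, Polynomial.C_0, zero_add, zero_add]
    have hre : (Polynomial.C (B i1 (σ i1)) * Polynomial.X) *
        ((Polynomial.C (B i2 (σ i2)) * Polynomial.X) *
          ∏ i ∈ s, (Polynomial.C (C i (σ i)) + Polynomial.C (B i (σ i)) * Polynomial.X))
        = (Polynomial.C (B i1 (σ i1)) * Polynomial.C (B i2 (σ i2)) *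
            ∏ i ∈ s, (Polynomial.C (C i (σ i)) + Polynomial.C (B i (σ i)) * Polynomial.X))
          * Polynomial.X ^ 2 := by ring
    rw [hre, show (2:ℕ) = 0 + 2 from rfl, Polynomial.coeff_mul_X_pow,
      Polynomial.coeff_zero_eq_eval_zero]
    simp [Polynomial.eval_prod]
  have hprodC : ∀ σ : Equiv.Perm (Fin n),
      (∏ i ∈ s, C i (σ i)) = if ∀ i ∈ s, σ i = σ0 i then 1 else 0 := by
    intro σ
    rw [Finset.prod_congr rfl (fun i hi => show C i (σ i) = if σ i = σ0 i then 1 else 0 by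
      simp only [hsdef, Finset.mem_erase] at hi
      rw [hCapp]
      simp [hi.1, hi.2.1])]
    convert Finset.prod_boole (p := fun i => σ i = σ0 i) (s := s) (M₀ := K) using 2
  set σB := Equiv.swap (σ0 i1) (σ0 i2) * σ0 with hσB
  have hswap : σ0 i1 ≠ σ0 i2 := fun h => h12 (σ0.injective h)
  have hBi1 : σB i1 = σ0 i2 := by
    simp [hσB, Equiv.Perm.mul_apply, Equiv.swap_apply_left]
  have hBi2 : σB i2 = σ0 i1 := by
    simp [hσB, Equiv.Perm.mul_apply, Equiv.swap_apply_right]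
  have hABne : σ0 ≠ σB := by
    intro h
    exact hswap (by rw [← hBi1, ← h])
  have hagree : ∀ σ : Equiv.Perm (Fin n), (∀ i ∈ s, σ i = σ0 i) → σ = σ0 ∨ σ = σB := by
    intro σ hA
    have hmem : ∀ i, i ≠ i1 → i ≠ i2 → σ i = σ0 i := fun i hx hy =>
      hA i (by simp [hsdef, hx, hy])
    have hval : ∀ i, i = i1 ∨ i = i2 → σ i = σ0 i1 ∨ σ i = σ0 i2 := by
      intro i _hi
      rcases eq_or_ne (σ0.symm (σ i)) i1 with h | h
      · left; rw [← σ0.apply_symm_apply (σ i), h]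
      rcases eq_or_ne (σ0.symm (σ i)) i2 with h' | h'
      · right; rw [← σ0.apply_symm_apply (σ i), h']
      · exfalso
        have h2 : σ (σ0.symm (σ i)) = σ0 (σ0.symm (σ i)) := hmem _ h h'
        rw [σ0.apply_symm_apply] at h2
        have h3 := σ.injective h2
        rcases _hi with hi | hi
        · exact h (h3.trans hi)
        · exact h' (h3.trans hi)
    rcases hval i1 (Or.inl rfl) with h1 | h1
    · left
      apply Equiv.ext
      intro i
      rcases eq_or_ne i i1 with hcase | hi1
      · rw [hcase]; exact h1
      rcases eq_or_ne i i2 with hcase | hi2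
      · rw [hcase]
        rcases hval i2 (Or.inr rfl) with h2 | h2
        · exact absurd (σ.injective (h2.trans h1.symm)) (Ne.symm h12)
        · exact h2
      · exact hmem i hi1 hi2
    · right
      apply Equiv.ext
      intro i
      rcases eq_or_ne i i1 with hcase | hi1
      · rw [hcase, h1, hBi1]
      rcases eq_or_ne i i2 with hcase | hi2
      · rw [hcase]
        rcases hval i2 (Or.inr rfl) with h2 | h2
        · rw [h2, hBi2]
        · exact absurd (σ.injective (h1.trans h2.symm)) h12
      · rw [hmem i hi1 hi2, hσB]
        simp only [Equiv.Perm.mul_apply]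
        rw [Equiv.swap_apply_of_ne_of_ne (fun h => hi1 (σ0.injective h))
          (fun h => hi2 (σ0.injective h))]
  have hcoeffsum : q.coeff 2 = ∑ σ : Equiv.Perm (Fin n),
      wt α β σ * (B i1 (σ i1) * B i2 (σ i2) * if ∀ i ∈ s, σ i = σ0 i then 1 else 0) := by
    rw [hqdef, Polynomial.finset_sum_coeff]
    refine Finset.sum_congr rfl fun σ _ => ?_
    rw [Polynomial.coeff_C_mul, hFcoeff, hprodC]
  have hsum2 : q.coeff 2 =
      wt α β σ0 * (B i1 (σ0 i1) * B i2 (σ0 i2)) + wt α β σB * (B i1 (σB i1) * B i2 (σB i2)) := by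
    rw [hcoeffsum]
    rw [← Finset.sum_subset (Finset.subset_univ ({σ0, σB} : Finset (Equiv.Perm (Fin n))))]
    · rw [Finset.sum_pair hABne]
      have hAagree : ∀ i ∈ s, σ0 i = σ0 i := fun i _ => rfl
      have hBagree : ∀ i ∈ s, σB i = σ0 i := by
        intro i hi
        simp only [hsdef, Finset.mem_erase] at hi
        simp only [hσB, Equiv.Perm.mul_apply]
        exact Equiv.swap_apply_of_ne_of_ne (fun h => hi.2.1 (σ0.injective h))
          (fun h => hi.1 (σ0.injective h))
      rw [if_pos hAagree, if_pos hBagree, mul_one, mul_one]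
    · intro σ _ hσ
      have hnot : ¬ (∀ i ∈ s, σ i = σ0 i) := by
        intro hA
        rcases hagree σ hA with rfl | rfl
        · exact hσ (by simp)
        · exact hσ (by simp)
      rw [if_neg hnot, mul_zero, mul_zero]
  rw [hc2, hBi1, hBi2] at hsum2
  exact hsum2.symm

lemma crossFree_of_affine [CharZero K] (hn : 4 ≤ n) (α β : K) (hαβ : α ≠ β) (hαβ' : α ≠ -β)
    (B : Matrix (Fin n) (Fin n) K) (hB : Affine α β B) : CrossFree B := by
  classical
  intro i1 i2 j1 j2 h12 hj12
  rw [← mul_eq_zero]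
  by_contra hx
  -- build σ with σ i1 = j1, σ i2 = j2
  set e : Equiv.Perm (Fin n) := Equiv.swap i1 j1 with he
  have hei2 : e i2 ≠ j1 := by
    intro h
    have : e i2 = e i1 := by rw [h, he, Equiv.swap_apply_left]
    exact h12.symm (e.injective this)
  set σ : Equiv.Perm (Fin n) := Equiv.swap j2 (e i2) * e with hσ
  have hσ1 : σ i1 = j1 := by
    rw [hσ, Equiv.Perm.mul_apply, he]
    rw [Equiv.swap_apply_left]
    exact Equiv.swap_apply_of_ne_of_ne hj12 (Ne.symm hei2)
  have hσ2 : σ i2 = j2 := by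
    rw [hσ, Equiv.Perm.mul_apply, Equiv.swap_apply_right]
  -- pick k1 k2 outside {i1, i2}
  have hcard : 1 < ((univ.erase i1).erase i2).card := by
    rw [Finset.card_erase_of_mem (Finset.mem_erase.2 ⟨h12.symm, mem_univ i2⟩),
      Finset.card_erase_of_mem (mem_univ i1), Finset.card_univ, Fintype.card_fin]
    omega
  obtain ⟨k1, hk1, k2, hk2, hkne⟩ := Finset.one_lt_card.1 hcard
  rw [Finset.mem_erase, Finset.mem_erase] at hk1 hk2
  set σ' : Equiv.Perm (Fin n) := Equiv.swap (σ k1) (σ k2) * σ with hσ'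
  have hσ'1 : σ' i1 = j1 := by
    rw [hσ', Equiv.Perm.mul_apply,
      Equiv.swap_apply_of_ne_of_ne (fun h => hk1.2.1 (σ.injective h).symm)
        (fun h => hk2.2.1 (σ.injective h).symm), hσ1]
  have hσ'2 : σ' i2 = j2 := by
    rw [hσ', Equiv.Perm.mul_apply,
      Equiv.swap_apply_of_ne_of_ne (fun h => hk1.1 (σ.injective h).symm)
        (fun h => hk2.1 (σ.injective h).symm), hσ2]
  have hsign' : Equiv.Perm.sign σ' = - Equiv.Perm.sign σ := by
    rw [hσ', Equiv.Perm.sign_mul, Equiv.Perm.sign_swap (show σ k1 ≠ σ k2 from fun h => hkne (σ.injective h))]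
    simp
  have eq1 := keycoef α β B hB i1 i2 h12 σ
  have eq2 := keycoef α β B hB i1 i2 h12 σ'
  rw [hσ1, hσ2] at eq1
  rw [hσ'1, hσ'2] at eq2
  have hsignswap : ∀ τ : Equiv.Perm (Fin n), τ i1 = j1 → τ i2 = j2 →
      Equiv.Perm.sign (Equiv.swap j1 j2 * τ) = - Equiv.Perm.sign τ := by
    intro τ h1 h2
    rw [Equiv.Perm.sign_mul, Equiv.Perm.sign_swap hj12]
    simp
  -- turn wt values into α/β depending on sign σ
  set x := B i1 j1 * B i2 j2 with hxdef
  set y := B i1 j2 * B i2 j1 with hydef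
  have key : α * x + β * y = 0 ∧ β * x + α * y = 0 := by
    rcases Int.units_eq_one_or (Equiv.Perm.sign σ) with hs | hs
    · have w1 : wt α β σ = α := by rw [wt, if_pos hs]
      have w2 : wt α β (Equiv.swap j1 j2 * σ) = β := by
        rw [wt, if_neg]; rw [hsignswap σ hσ1 hσ2, hs]; decide
      have w3 : wt α β σ' = β := by
        rw [wt, if_neg]; rw [hsign', hs]; decide
      have w4 : wt α β (Equiv.swap j1 j2 * σ') = α := by
        rw [wt, if_pos]; rw [hsignswap σ' hσ'1 hσ'2, hsign', hs]; decide
      rw [w1, w2] at eq1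
      rw [w3, w4] at eq2
      exact ⟨eq1, eq2⟩
    · have w1 : wt α β σ = β := by rw [wt, if_neg]; rw [hs]; decide
      have w2 : wt α β (Equiv.swap j1 j2 * σ) = α := by
        rw [wt, if_pos]; rw [hsignswap σ hσ1 hσ2, hs]; decide
      have w3 : wt α β σ' = α := by
        rw [wt, if_pos]; rw [hsign', hs]; decide
      have w4 : wt α β (Equiv.swap j1 j2 * σ') = β := by
        rw [wt, if_neg]; rw [hsignswap σ' hσ'1 hσ'2, hsign', hs]; decide
      rw [w1, w2] at eq1
      rw [w3, w4] at eq2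
      exact ⟨eq2, eq1⟩
  obtain ⟨keyA, keyB⟩ := key
  have hsumne : α + β ≠ 0 := fun h => hαβ' (by linear_combination h)
  have hdiffne : α - β ≠ 0 := sub_ne_zero.2 hαβ
  have hxy : x + y = 0 := by
    have h5 : (α + β) * (x + y) = 0 := by linear_combination keyA + keyB
    exact (mul_eq_zero.1 h5).resolve_left hsumne
  have hxy' : x - y = 0 := by
    have h5 : (α - β) * (x - y) = 0 := by linear_combination keyA - keyB
    exact (mul_eq_zero.1 h5).resolve_left hdiffne
  have : x = 0 := by
    have h2 : (2:K) * x = 0 := by linear_combination hxy + hxy'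
    have := mul_eq_zero.1 h2
    simpa using this
  exact hx this

lemma affine_image (α β : K) (T : Matrix (Fin n) (Fin n) K ≃ₗ[K] Matrix (Fin n) (Fin n) K)
    (hT : ∀ A, gdet α β (T A) = gdet α β A) (M : Matrix (Fin n) (Fin n) K)
    (hM : Affine α β M) : Affine α β (T M) := by
  obtain ⟨h, hh⟩ := hM
  refine ⟨fun C => h (T.symm C), fun C t => ?_⟩
  have key : C + t • T M = T (T.symm C + t • M) := by
    rw [map_add, _root_.map_smul, T.apply_symm_apply]
  rw [key, hT, hh, ← hT (T.symm C), T.apply_symm_apply]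

lemma rowkill [CharZero K] (B1 Bj : Matrix (Fin n) (Fin n) K) (r c1 c2 : Fin n)
    (hc : c1 ≠ c2) (h1 : B1 r c1 ≠ 0) (h2 : B1 r c2 ≠ 0)
    (hCF : ∀ lam : K, CrossFree (B1 + lam • Bj)) :
    ∀ a b, a ≠ r → Bj a b = 0 := by
  classical
  intro a b ha
  by_contra hab
  have hCF0 : CrossFree B1 := by
    have := hCF 0
    rwa [zero_smul, add_zero] at this
  have hB1off : ∀ b', B1 a b' = 0 := by
    intro b'
    rcases eq_or_ne b' c1 with rfl | hbc1
    · rcases hCF0 a r b' c2 ha (Ne.symm (Ne.symm hc)) with h | h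
      · exact h
      · exact absurd h h2
    · rcases hCF0 a r b' c1 ha hbc1 with h | h
      · exact h
      · exact absurd h h1
  obtain ⟨lam, hlam⟩ := Infinite.exists_notMem_finset
    ({0, -B1 r c1 * (Bj r c1)⁻¹, -B1 r c2 * (Bj r c2)⁻¹} : Finset K)
  simp only [Finset.mem_insert, Finset.mem_singleton, not_or] at hlam
  obtain ⟨hl0, hl1, hl2⟩ := hlam
  have E1 : (B1 + lam • Bj) r c1 ≠ 0 := by
    simp only [Matrix.add_apply, Matrix.smul_apply, smul_eq_mul]
    intro h
    rcases eq_or_ne (Bj r c1) 0 with hz | hz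
    · rw [hz, mul_zero, add_zero] at h; exact h1 h
    · apply hl1
      field_simp
      linear_combination h
  have E2 : (B1 + lam • Bj) r c2 ≠ 0 := by
    simp only [Matrix.add_apply, Matrix.smul_apply, smul_eq_mul]
    intro h
    rcases eq_or_ne (Bj r c2) 0 with hz | hz
    · rw [hz, mul_zero, add_zero] at h; exact h2 h
    · apply hl2
      field_simp
      linear_combination h
  have E3 : (B1 + lam • Bj) a b ≠ 0 := by
    simp only [Matrix.add_apply, Matrix.smul_apply, smul_eq_mul, hB1off b, zero_add]
    exact mul_ne_zero hl0 hab
  rcases eq_or_ne b c1 with rfl | hbc1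
  · rcases hCF lam a r b c2 ha hc with h | h
    · exact E3 h
    · exact E2 h
  · rcases hCF lam a r b c1 ha hbc1 with h | h
    · exact E3 h
    · exact E1 h

lemma row_contradiction [CharZero K] (hn : 4 ≤ n) (α β : K) (hαβ : α ≠ β) (hαβ' : α ≠ -β)
    (T : Matrix (Fin n) (Fin n) K ≃ₗ[K] Matrix (Fin n) (Fin n) K)
    (hT : ∀ A, gdet α β (T A) = gdet α β A)
    (i0 j0 r c1 c2 : Fin n) (hc : c1 ≠ c2)
    (h1 : T (Matrix.single i0 j0 1) r c1 ≠ 0)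
    (h2 : T (Matrix.single i0 j0 1) r c2 ≠ 0) : False := by
  classical
  have hrowM : ∀ (j : Fin n) (lam : K),
      Affine α β (Matrix.single i0 j0 1 + lam • Matrix.single i0 j (1:K)) := by
    intro j lam
    apply affine_row α β _ i0
    intro a ha b
    simp [Matrix.single, Matrix.of_apply, Matrix.add_apply, Ne.symm ha]
  have hcolM : ∀ (i : Fin n) (lam : K),
      Affine α β (Matrix.single i0 j0 1 + lam • Matrix.single i j0 (1:K)) := by
    intro i lam
    apply affine_col α β _ j0
    intro a b hb
    simp [Matrix.single, Matrix.of_apply, Matrix.add_apply, Ne.symm hb]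
  have hrowimg : ∀ j a b, a ≠ r → T (Matrix.single i0 j 1) a b = 0 := by
    intro j
    apply rowkill (T (Matrix.single i0 j0 1)) _ r c1 c2 hc h1 h2
    intro lam
    have hmap : T (Matrix.single i0 j0 1) + lam • T (Matrix.single i0 j 1)
        = T (Matrix.single i0 j0 1 + lam • Matrix.single i0 j 1) := by
      rw [map_add, _root_.map_smul]
    rw [hmap]
    exact crossFree_of_affine hn α β hαβ hαβ' _ (affine_image α β T hT _ (hrowM j lam))
  have hcolimg : ∀ i a b, a ≠ r → T (Matrix.single i j0 1) a b = 0 := by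
    intro i
    apply rowkill (T (Matrix.single i0 j0 1)) _ r c1 c2 hc h1 h2
    intro lam
    have hmap : T (Matrix.single i0 j0 1) + lam • T (Matrix.single i j0 1)
        = T (Matrix.single i0 j0 1 + lam • Matrix.single i j0 1) := by
      rw [map_add, _root_.map_smul]
    rw [hmap]
    exact crossFree_of_affine hn α β hαβ hαβ' _ (affine_image α β T hT _ (hcolM i lam))
  haveI : Nontrivial (Fin n) := ⟨⟨⟨0, by omega⟩, ⟨1, by omega⟩, by simp [Fin.ext_iff]⟩⟩
  obtain ⟨i1, hi1⟩ := exists_ne i0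
  set v : (Fin n ⊕ Unit) → Matrix (Fin n) (Fin n) K :=
    Sum.elim (fun j => Matrix.single i0 j 1)
      (fun _ => Matrix.single i1 j0 1) with hv
  have himg : ∀ k a b, a ≠ r → T (v k) a b = 0 := by
    rintro (j | u) a b ha
    · exact hrowimg j a b ha
    · exact hcolimg i1 a b ha
  have hLI : LinearIndependent K (fun k => (fun b => T (v k) r b)) := by
    rw [Fintype.linearIndependent_iff]
    intro g hg
    set A := ∑ k, g k • v k with hA
    have happ : ∀ a b, A a b = ∑ k, g k * v k a b := by
      intro a b
      rw [hA, Matrix.sum_apply]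
      exact Finset.sum_congr rfl fun k _ => by rw [Matrix.smul_apply, smul_eq_mul]
    have hTA : T A = ∑ k, g k • T (v k) := by
      rw [hA, map_sum]
      exact Finset.sum_congr rfl fun k _ => by rw [_root_.map_smul]
    have hTA0 : T A = 0 := by
      ext a b
      rw [hTA, Matrix.zero_apply, Matrix.sum_apply]
      rcases eq_or_ne a r with rfl | ha
      · have hgb := congrFun hg b
        simp only [Finset.sum_apply, Pi.smul_apply, smul_eq_mul, Pi.zero_apply] at hgb
        simpa [Matrix.smul_apply, smul_eq_mul] using hgb
      · apply Finset.sum_eq_zero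
        intro k _
        rw [Matrix.smul_apply, himg k a b ha, smul_zero]
    have hA0 : A = 0 := by
      have h3 := congrArg T.symm hTA0
      rwa [T.symm_apply_apply, map_zero] at h3
    have hz : ∀ a b, (∑ k, g k * v k a b) = 0 := by
      intro a b
      rw [← happ a b, hA0, Matrix.zero_apply]
    rintro (j | u)
    · have hzz := hz i0 j
      simp only [hv, Fintype.sum_sum_type, Sum.elim_inl, Sum.elim_inr] at hzz
      rw [Finset.sum_eq_single j] at hzz
      · simpa [Matrix.single, Matrix.of_apply, hi1, Ne.symm hi1] using hzz
      · intro j' _ hj'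
        simp [Matrix.single, Matrix.of_apply, hj']
      · intro hj; exact absurd (mem_univ j) hj
    · have hzz := hz i1 j0
      rw [Finset.sum_eq_single (Sum.inr u)] at hzz
      · simpa [hv, Matrix.single, Matrix.of_apply] using hzz
      · rintro (j' | u') _ hj'
        · simp [hv, Matrix.single, Matrix.of_apply, hi1, Ne.symm hi1]
        · exact absurd rfl hj'
      · intro hj; exact absurd (mem_univ _) hj
  have hcard := hLI.fintype_card_le_finrank
  rw [Module.finrank_fintype_fun_eq_card] at hcard
  simp only [Fintype.card_sum, Fintype.card_fin, Fintype.card_unit] at hcard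
  omega

lemma transpose_stdBasis (i j : Fin n) :
    (Matrix.single i j (1:K))ᵀ = Matrix.single j i (1:K) := by
  ext a b
  simp [Matrix.single, Matrix.transpose_apply, Matrix.of_apply, and_comm]

lemma unit_monomial [CharZero K] (hn : 4 ≤ n) (α β : K) (hαβ : α ≠ β) (hαβ' : α ≠ -β)
    (T : Matrix (Fin n) (Fin n) K ≃ₗ[K] Matrix (Fin n) (Fin n) K)
    (hT : ∀ A, gdet α β (T A) = gdet α β A) (i0 j0 : Fin n) :
    ∃ r c, T (Matrix.single i0 j0 (1:K)) r c ≠ 0 ∧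
      ∀ a b, ¬(a = r ∧ b = c) → T (Matrix.single i0 j0 (1:K)) a b = 0 := by
  classical
  set B := T (Matrix.single i0 j0 (1:K)) with hB
  have hBne : B ≠ 0 := by
    intro h0
    have hE : Matrix.single i0 j0 (1:K) = 0 := by
      have h3 := congrArg T.symm h0
      rwa [T.symm_apply_apply, map_zero] at h3
    have := congrFun (congrFun hE i0) j0
    simp [Matrix.single, Matrix.of_apply] at this
  obtain ⟨r, c, hrc⟩ : ∃ r c, B r c ≠ 0 := by
    by_contra h
    push_neg at h
    exact hBne (by ext a b; simp [h a b])
  have hCF : CrossFree B := by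
    apply crossFree_of_affine hn α β hαβ hαβ'
    apply affine_image α β T hT
    apply affine_row α β _ i0
    intro a ha b
    simp [Matrix.single, Matrix.of_apply, Ne.symm ha]
  refine ⟨r, c, hrc, fun a b hab => ?_⟩
  rcases eq_or_ne a r with rfl | har
  · rcases eq_or_ne b c with rfl | hbc
    · exact absurd ⟨rfl, rfl⟩ hab
    · -- two entries in row a
      by_contra hne
      exact row_contradiction hn α β hαβ hαβ' T hT i0 j0 a b c hbc hne hrc
  · rcases eq_or_ne b c with rfl | hbc
    · -- two entries in column b : use transposed map
      by_contra hne
      set e := Matrix.transposeLinearEquiv (Fin n) (Fin n) K K with he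
      set T' := (e.trans T).trans e with hT'def
      have hT' : ∀ A, gdet α β (T' A) = gdet α β A := by
        intro A
        show gdet α β (T Aᵀ)ᵀ = gdet α β A
        rw [gdet_transpose, hT, gdet_transpose]
      have hIm : T' (Matrix.single j0 i0 (1:K)) = Bᵀ := by
        show (T (Matrix.single j0 i0 (1:K))ᵀ)ᵀ = Bᵀ
        rw [transpose_stdBasis, hB]
      apply row_contradiction hn α β hαβ hαβ' T' hT' j0 i0 b r a (Ne.symm har)
      · rw [hIm]; exact hrc
      · rw [hIm]; exact hne
    · exact (hCF a r b c har hbc).resolve_right (fun h => hrc h)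

end GAux

/-- for `n ≥ 4` and `α ≠ ±β`, if `T` stabilizes `det^{(α,β)}`, then the map
`(i,j) ↦ (i',j')` sending each position to the position of the unique nonzero entry of
`T(E_{ij})` is a bijection of `{1,…,n} × {1,…,n}`, and `T(E_{ij}) = c_{ij}·E_{i'j'}` for
nonzero scalars `c_{ij}`. -/
theorem image_of_matrix_units_monomial {K : Type*} [Field K] [CharZero K]
    {n : ℕ} (hn : 4 ≤ n) (α β : K) (hαβ : α ≠ β) (hαβ' : α ≠ -β)
    (T : Matrix (Fin n) (Fin n) K ≃ₗ[K] Matrix (Fin n) (Fin n) K)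
    (hT : ∀ A, gdet α β (T A) = gdet α β A) :
    ∃ (φ : Fin n × Fin n ≃ Fin n × Fin n) (c : Fin n → Fin n → K),
      (∀ i j : Fin n, c i j ≠ 0) ∧
      (∀ i j : Fin n,
        T (Matrix.single i j (1 : K)) =
          c i j • Matrix.single (φ (i, j)).1 (φ (i, j)).2 (1 : K)) := by

  classical
  have H : ∀ p : Fin n × Fin n, ∃ s : Fin n × Fin n,
      T (Matrix.single p.1 p.2 (1:K)) s.1 s.2 ≠ 0 ∧
      ∀ a b, ¬(a = s.1 ∧ b = s.2) → T (Matrix.single p.1 p.2 (1:K)) a b = 0 := by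
    intro p
    obtain ⟨r, c, h1, h2⟩ := GAux.unit_monomial hn α β hαβ hαβ' T hT p.1 p.2
    exact ⟨(r, c), h1, h2⟩
  choose q hq1 hq2 using H
  have hinj : Function.Injective q := by
    intro p1 p2 hq
    by_contra hne
    set d1 := T (Matrix.single p1.1 p1.2 (1:K)) (q p1).1 (q p1).2 with hd1
    set d2 := T (Matrix.single p2.1 p2.2 (1:K)) (q p2).1 (q p2).2 with hd2
    have hM : T (d2 • Matrix.single p1.1 p1.2 (1:K)
        - d1 • Matrix.single p2.1 p2.2 (1:K)) = 0 := by
      rw [map_sub, _root_.map_smul, _root_.map_smul]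
      ext a b
      simp only [Matrix.sub_apply, Matrix.smul_apply, smul_eq_mul, Matrix.zero_apply]
      by_cases hcase : a = (q p1).1 ∧ b = (q p1).2
      · obtain ⟨ha, hb⟩ := hcase
        rw [ha, hb, ← hd1]
        have h2eq : T (Matrix.single p2.1 p2.2 (1:K)) (q p1).1 (q p1).2 = d2 := by
          rw [hq, hd2]
        rw [h2eq]
        ring
      · rw [hq2 p1 a b hcase, hq2 p2 a b (by rw [← hq]; exact hcase)]
        ring
    have hM0 : d2 • Matrix.single p1.1 p1.2 (1:K)
        - d1 • Matrix.single p2.1 p2.2 (1:K) = 0 := by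
      have h3 := congrArg T.symm hM
      rwa [T.symm_apply_apply, map_zero] at h3
    have hent := congrFun (congrFun hM0 p1.1) p1.2
    have hne2 : ¬(p2.1 = p1.1 ∧ p2.2 = p1.2) := by
      rintro ⟨ha, hb⟩
      exact hne (Prod.ext ha hb).symm
    simp only [Matrix.sub_apply, Matrix.smul_apply, smul_eq_mul, Matrix.zero_apply,
      Matrix.single, Matrix.of_apply, and_self, if_true, hne2, if_false,
      mul_one, mul_zero, sub_zero, if_neg hne2] at hent
    exact hq1 p2 hent
  refine ⟨Equiv.ofBijective q (Finite.injective_iff_bijective.1 hinj),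
    fun i j => T (Matrix.single i j (1:K)) (q (i,j)).1 (q (i,j)).2,
    fun i j => hq1 (i,j), fun i j => ?_⟩
  have hφ : Equiv.ofBijective q (Finite.injective_iff_bijective.1 hinj) (i,j) = q (i,j) := rfl
  rw [hφ]
  ext a b
  simp only [Matrix.smul_apply, smul_eq_mul]
  by_cases hcase : a = (q (i,j)).1 ∧ b = (q (i,j)).2
  · obtain ⟨ha, hb⟩ := hcase
    rw [ha, hb]
    simp [Matrix.single, Matrix.of_apply]
  · rw [hq2 (i,j) a b hcase]
    have hz : Matrix.single (q (i,j)).1 (q (i,j)).2 (1:K) a b = 0 := by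
      simp only [Matrix.single, Matrix.of_apply]
      rw [if_neg]
      rintro ⟨ha, hb⟩
      exact hcase ⟨ha.symm, hb.symm⟩
    rw [hz, mul_zero]
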